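/- Along any solution of the Lagrange–Routh reduced equation Γ̈ = −‖Γ̇‖²Γ + Γ × Σ (with Σ, b, c, ν as defined from J, ρ, m, g, μ), the total energy E = (1/2)(Γ̇×Γ + (ν−b)Γ)ᵀ J (Γ̇×Γ + (ν−b)Γ) − mg ρᵀΓ is constant. -/

import Mathlib

set_option maxHeartbeats 2000000


open Matrix

/-- `b = JΓ·(Γ̇×Γ)/(Γ·JΓ)`. -/
noncomputable def bR (J : Matrix (Fin 3) (Fin 3) ℝ) (Γ Γ' : Fin 3 → ℝ) : ℝ :=
  (J.mulVec Γ ⬝ᵥ crossProduct Γ' Γ) / (Γ ⬝ᵥ J.mulVec Γ)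

/-- `ν = μ/(Γ·JΓ)`. -/
noncomputable def νR (J : Matrix (Fin 3) (Fin 3) ℝ) (μ : ℝ) (Γ : Fin 3 → ℝ) : ℝ :=
  μ / (Γ ⬝ᵥ J.mulVec Γ)

/-- `c = ν(tr(J) − 2‖JΓ‖²/(Γ·JΓ))`. -/
noncomputable def cR (J : Matrix (Fin 3) (Fin 3) ℝ) (μ : ℝ) (Γ : Fin 3 → ℝ) : ℝ :=
  νR J μ Γ * (J.trace - 2 * (J.mulVec Γ ⬝ᵥ J.mulVec Γ) / (Γ ⬝ᵥ J.mulVec Γ))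

/-- `Σ = bΓ̇ + J⁻¹[(J(Γ̇×Γ) − bJΓ)×((Γ̇×Γ) − bΓ) + ν²JΓ×Γ − mgΓ×ρ − cΓ̇]`. -/
noncomputable def SigmaR (J : Matrix (Fin 3) (Fin 3) ℝ) (m g μ : ℝ) (ρ Γ Γ' : Fin 3 → ℝ) :
    Fin 3 → ℝ :=
  bR J Γ Γ' • Γ' + J⁻¹.mulVec
    (crossProduct (J.mulVec (crossProduct Γ' Γ) - bR J Γ Γ' • J.mulVec Γ)
        (crossProduct Γ' Γ - bR J Γ Γ' • Γ)
      + (νR J μ Γ) ^ 2 • crossProduct (J.mulVec Γ) Γ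
      - (m * g) • crossProduct Γ ρ - cR J μ Γ • Γ')

/-- The Lagrange–Routh total energy
`E = (1/2)(Γ̇×Γ + (ν−b)Γ)ᵀ J (Γ̇×Γ + (ν−b)Γ) − mg ρᵀΓ`. -/
noncomputable def ER (J : Matrix (Fin 3) (Fin 3) ℝ) (m g μ : ℝ) (ρ Γ Γ' : Fin 3 → ℝ) : ℝ :=
  (1/2) * ((crossProduct Γ' Γ + (νR J μ Γ - bR J Γ Γ') • Γ) ⬝ᵥ
      J.mulVec (crossProduct Γ' Γ + (νR J μ Γ - bR J Γ Γ') • Γ))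
    - m * g * (ρ ⬝ᵥ Γ)

lemma hasDerivAt_dot3 {f g : ℝ → Fin 3 → ℝ} {f' g' : Fin 3 → ℝ} {t : ℝ}
    (hf : HasDerivAt f f' t) (hg : HasDerivAt g g' t) :
    HasDerivAt (fun s => f s ⬝ᵥ g s) (f' ⬝ᵥ g t + f t ⬝ᵥ g') t := by
  have hfi : ∀ i, HasDerivAt (fun s => f s i) (f' i) t := hasDerivAt_pi.mp hf
  have hgi : ∀ i, HasDerivAt (fun s => g s i) (g' i) t := hasDerivAt_pi.mp hg
  have h := (((hfi 0).mul (hgi 0)).add ((hfi 1).mul (hgi 1))).add ((hfi 2).mul (hgi 2))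
  convert h using 1
  all_goals first
  | (funext s; simp [dotProduct, Fin.sum_univ_three])
  | (simp [dotProduct, Fin.sum_univ_three]; ring)
  | rfl

lemma hasDerivAt_cross3 {f g : ℝ → Fin 3 → ℝ} {f' g' : Fin 3 → ℝ} {t : ℝ}
    (hf : HasDerivAt f f' t) (hg : HasDerivAt g g' t) :
    HasDerivAt (fun s => crossProduct (f s) (g s))
      (crossProduct f' (g t) + crossProduct (f t) g') t := by
  have hfi : ∀ i, HasDerivAt (fun s => f s i) (f' i) t := hasDerivAt_pi.mp hf
  have hgi : ∀ i, HasDerivAt (fun s => g s i) (g' i) t := hasDerivAt_pi.mp hg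
  apply hasDerivAt_pi.mpr
  intro i
  fin_cases i
  · convert ((hfi 1).mul (hgi 2)).sub ((hfi 2).mul (hgi 1)) using 1
    all_goals first
    | (funext s; simp [crossProduct])
    | (simp [crossProduct]; ring)
  · convert ((hfi 2).mul (hgi 0)).sub ((hfi 0).mul (hgi 2)) using 1
    all_goals first
    | (funext s; simp [crossProduct])
    | (simp [crossProduct]; ring)
  · convert ((hfi 0).mul (hgi 1)).sub ((hfi 1).mul (hgi 0)) using 1
    all_goals first
    | (funext s; simp [crossProduct])
    | (simp [crossProduct]; ring)

lemma hasDerivAt_mulVec3 (J : Matrix (Fin 3) (Fin 3) ℝ) {f : ℝ → Fin 3 → ℝ} {f' : Fin 3 → ℝ} {t : ℝ}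
    (hf : HasDerivAt f f' t) :
    HasDerivAt (fun s => J.mulVec (f s)) (J.mulVec f') t := by
  have hfi : ∀ i, HasDerivAt (fun s => f s i) (f' i) t := hasDerivAt_pi.mp hf
  apply hasDerivAt_pi.mpr
  intro i
  convert (((hfi 0).const_mul (J i 0)).add ((hfi 1).const_mul (J i 1))).add ((hfi 2).const_mul (J i 2)) using 1
  all_goals first
  | (funext s; simp [Matrix.mulVec, dotProduct, Fin.sum_univ_three])
  | (simp [Matrix.mulVec, dotProduct, Fin.sum_univ_three]; try ring)

lemma crosshelp (G H S : Fin 3 → ℝ) (h1 : G ⬝ᵥ G = 1) :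
    crossProduct (-(H ⬝ᵥ H) • G + crossProduct G S) G = S - (G ⬝ᵥ S) • G := by
  simp only [dotProduct, Fin.sum_univ_three] at h1
  ext i
  fin_cases i <;>
    simp [crossProduct, dotProduct, Fin.sum_univ_three, Matrix.vecHead, Matrix.vecTail,
      Function.comp, Pi.smul_apply, Pi.add_apply, smul_eq_mul] <;>
    [linear_combination S 0 * h1; linear_combination S 1 * h1; linear_combination S 2 * h1]

lemma cross_add_left (x y z : Fin 3 → ℝ) :
    crossProduct (x + y) z = crossProduct x z + crossProduct y z := by
  rw [map_add]; rfl

lemma cross_sub_left (x y z : Fin 3 → ℝ) :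
    crossProduct (x - y) z = crossProduct x z - crossProduct y z := by
  rw [map_sub]; rfl

lemma cross_smul_left (c : ℝ) (x z : Fin 3 → ℝ) :
    crossProduct (c • x) z = c • crossProduct x z := by
  rw [_root_.map_smul]; rfl

lemma cross_add_right (x y z : Fin 3 → ℝ) :
    crossProduct x (y + z) = crossProduct x y + crossProduct x z := map_add _ _ _

lemma cross_sub_right (x y z : Fin 3 → ℝ) :
    crossProduct x (y - z) = crossProduct x y - crossProduct x z := map_sub _ _ _

lemma cross_smul_right (c : ℝ) (x z : Fin 3 → ℝ) :
    crossProduct x (c • z) = c • crossProduct x z := _root_.map_smul _ _ _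

lemma routh_key (J : Matrix (Fin 3) (Fin 3) ℝ) (hJsymm : J.IsSymm) (hdet : IsUnit J.det)
    (m g μ : ℝ) (ρ G H K : Fin 3 → ℝ)
    (h1 : G ⬝ᵥ G = 1) (h2 : G ⬝ᵥ H = 0) (hDne : G ⬝ᵥ J.mulVec G ≠ 0)
    (hK : K = -(H ⬝ᵥ H) • G + crossProduct G (SigmaR J m g μ ρ G H)) :
    1 / 2 *
      ((crossProduct K G + crossProduct H H +
          ((μ / (G ⬝ᵥ J *ᵥ G) - J *ᵥ G ⬝ᵥ crossProduct H G / (G ⬝ᵥ J *ᵥ G)) • H +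
            ((0 * (G ⬝ᵥ J *ᵥ G) - μ * (H ⬝ᵥ J *ᵥ G + G ⬝ᵥ J *ᵥ H)) / (G ⬝ᵥ J *ᵥ G) ^ 2 -
                ((J *ᵥ H ⬝ᵥ crossProduct H G +
                      J *ᵥ G ⬝ᵥ (crossProduct K G + crossProduct H H)) * (G ⬝ᵥ J *ᵥ G) -
                  J *ᵥ G ⬝ᵥ crossProduct H G * (H ⬝ᵥ J *ᵥ G + G ⬝ᵥ J *ᵥ H)) / (G ⬝ᵥ J *ᵥ G) ^ 2) • G)) ⬝ᵥ
        J *ᵥ (crossProduct H G + (μ / (G ⬝ᵥ J *ᵥ G) - J *ᵥ G ⬝ᵥ crossProduct H G / (G ⬝ᵥ J *ᵥ G)) • G) +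
      (crossProduct H G + (μ / (G ⬝ᵥ J *ᵥ G) - J *ᵥ G ⬝ᵥ crossProduct H G / (G ⬝ᵥ J *ᵥ G)) • G) ⬝ᵥ
        J *ᵥ (crossProduct K G + crossProduct H H +
          ((μ / (G ⬝ᵥ J *ᵥ G) - J *ᵥ G ⬝ᵥ crossProduct H G / (G ⬝ᵥ J *ᵥ G)) • H +
            ((0 * (G ⬝ᵥ J *ᵥ G) - μ * (H ⬝ᵥ J *ᵥ G + G ⬝ᵥ J *ᵥ H)) / (G ⬝ᵥ J *ᵥ G) ^ 2 -
                ((J *ᵥ H ⬝ᵥ crossProduct H G +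
                      J *ᵥ G ⬝ᵥ (crossProduct K G + crossProduct H H)) * (G ⬝ᵥ J *ᵥ G) -
                  J *ᵥ G ⬝ᵥ crossProduct H G * (H ⬝ᵥ J *ᵥ G + G ⬝ᵥ J *ᵥ H)) / (G ⬝ᵥ J *ᵥ G) ^ 2) • G))) -
      m * g * ((0 : Fin 3 → ℝ) ⬝ᵥ G + ρ ⬝ᵥ H) = 0 := by
  have hsym : ∀ x y : Fin 3 → ℝ, J *ᵥ x ⬝ᵥ y = x ⬝ᵥ J *ᵥ y := by
    intro x y
    rw [Matrix.dotProduct_mulVec, ← Matrix.vecMul_transpose, hJsymm.eq]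
  have hJJ : ∀ x : Fin 3 → ℝ, J *ᵥ (J⁻¹ *ᵥ x) = x := by
    intro x
    rw [Matrix.mulVec_mulVec, Matrix.mul_nonsing_inv _ hdet, Matrix.one_mulVec]
  rw [hK, crosshelp G H (SigmaR J m g μ ρ G H) h1, cross_self]
  obtain ⟨V, hSV, hVdef⟩ : ∃ V, SigmaR J m g μ ρ G H = bR J G H • H + J⁻¹.mulVec V ∧
      V = crossProduct (J.mulVec (crossProduct H G) - bR J G H • J.mulVec G)
            (crossProduct H G - bR J G H • G)
          + (νR J μ G) ^ 2 • crossProduct (J.mulVec G) G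
          - (m * g) • crossProduct G ρ - cR J μ G • H := ⟨_, rfl, rfl⟩
  rw [hSV]
  have o3 : J⁻¹ *ᵥ V ⬝ᵥ J *ᵥ crossProduct H G = crossProduct H G ⬝ᵥ V := by
    rw [dotProduct_comm, hsym, hJJ]
  have o4 : J⁻¹ *ᵥ V ⬝ᵥ J *ᵥ G = G ⬝ᵥ V := by
    rw [dotProduct_comm, hsym, hJJ]
  have o5 : ∀ x : Fin 3 → ℝ, J *ᵥ G ⬝ᵥ J⁻¹ *ᵥ x = G ⬝ᵥ x := by
    intro x; rw [hsym, hJJ]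
  have oJGH : J *ᵥ G ⬝ᵥ H = H ⬝ᵥ J *ᵥ G := by
    rw [hsym, ← hsym G H, dotProduct_comm]
  have o1 : H ⬝ᵥ J *ᵥ crossProduct H G = J *ᵥ H ⬝ᵥ crossProduct H G := (hsym H _).symm
  have o2 : G ⬝ᵥ J *ᵥ crossProduct H G = J *ᵥ G ⬝ᵥ crossProduct H G := (hsym G _).symm
  have oGH : G ⬝ᵥ J *ᵥ H = H ⬝ᵥ J *ᵥ G := by rw [← hsym G H, dotProduct_comm]
  have oJGG : J *ᵥ G ⬝ᵥ G = G ⬝ᵥ J *ᵥ G := hsym G G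
  have oHG : H ⬝ᵥ G = 0 := by rw [dotProduct_comm]; exact h2
  have oaH : crossProduct H G ⬝ᵥ H = 0 := by rw [dotProduct_comm]; exact dot_self_cross H G
  have oaJH : crossProduct H G ⬝ᵥ J *ᵥ H = J *ᵥ H ⬝ᵥ crossProduct H G := dotProduct_comm _ _
  have oaJG : crossProduct H G ⬝ᵥ J *ᵥ G = J *ᵥ G ⬝ᵥ crossProduct H G := dotProduct_comm _ _
  have orH : H ⬝ᵥ ρ = ρ ⬝ᵥ H := dotProduct_comm _ _
  have cyc : ∀ x y z : Fin 3 → ℝ, x ⬝ᵥ crossProduct y z = z ⬝ᵥ crossProduct x y := by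
    intro x y z
    rw [triple_product_permutation, triple_product_permutation y z x]
  have cG1 : G ⬝ᵥ crossProduct (J *ᵥ crossProduct H G) (crossProduct H G)
      = crossProduct H G ⬝ᵥ crossProduct G (J *ᵥ crossProduct H G) := cyc _ _ _
  have cG2 : G ⬝ᵥ crossProduct (J *ᵥ G) (crossProduct H G)
      = crossProduct H G ⬝ᵥ crossProduct G (J *ᵥ G) := cyc _ _ _
  have cG3 : G ⬝ᵥ crossProduct (J *ᵥ crossProduct H G) G = 0 := dot_cross_self _ _
  have cG4 : G ⬝ᵥ crossProduct (J *ᵥ G) G = 0 := dot_cross_self _ _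
  have cG5 : G ⬝ᵥ crossProduct G ρ = 0 := dot_self_cross _ _
  simp only [Matrix.mulVec_add, Matrix.mulVec_sub, Matrix.mulVec_smul, Matrix.mulVec_zero, hJJ,
    dotProduct_add, add_dotProduct, dotProduct_sub, sub_dotProduct,
    dotProduct_smul, smul_dotProduct, smul_eq_mul, zero_dotProduct, dotProduct_zero]
  simp only [o3, o4, o5, oJGH, oJGG, o1, o2, oGH, oHG, oaH, oaJH, oaJG, orH, h2, h1]
  generalize hσ : G ⬝ᵥ J⁻¹ *ᵥ V = σ
  rw [hVdef]
  simp only [cross_add_left, cross_sub_left, cross_smul_left,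
    cross_add_right, cross_sub_right, cross_smul_right,
    dotProduct_add, add_dotProduct, dotProduct_sub, sub_dotProduct,
    dotProduct_smul, smul_dotProduct, smul_eq_mul, zero_dotProduct, dotProduct_zero]
  simp only [cG1, cG2, cG3, cG4, cG5, oaH, oHG, h2, h1]
  simp only [cross_dot_cross, dot_self_cross, dot_cross_self]
  simp only [o1, o2, oJGH, oJGG, oGH, oHG, orH, h2, h1]
  simp only [bR, νR]
  set c := cR J μ G with hc
  set D := G ⬝ᵥ J *ᵥ G with hD
  set β := J *ᵥ G ⬝ᵥ crossProduct H G with hβ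
  set p1 := J *ᵥ H ⬝ᵥ crossProduct H G with hp1
  set p3 := H ⬝ᵥ J *ᵥ G with hp3
  set rh := ρ ⬝ᵥ H with hrh
  set hh := H ⬝ᵥ H with hhh
  have hD2 : D ≠ 0 := hDne
  field_simp
  ring

/-- Along any solution of the Lagrange–Routh reduced equation
`Γ̈ = −‖Γ̇‖²Γ + Γ × Σ`, the total energy `E` is constant. -/
theorem routh_energy_conserved
    (J : Matrix (Fin 3) (Fin 3) ℝ) (hJsymm : J.IsSymm) (hJpos : J.PosDef)
    (m g : ℝ) (hm : 0 < m) (hg : 0 < g) (ρ : Fin 3 → ℝ) (μ : ℝ)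
    (Γ Γ' Γ'' : ℝ → Fin 3 → ℝ)
    (hd1 : ∀ t, HasDerivAt Γ (Γ' t) t)
    (hd2 : ∀ t, HasDerivAt Γ' (Γ'' t) t)
    (hS2 : ∀ t, Γ t ⬝ᵥ Γ t = 1) (hT : ∀ t, Γ t ⬝ᵥ Γ' t = 0)
    (hdyn : ∀ t, Γ'' t = -(Γ' t ⬝ᵥ Γ' t) • Γ t
        + crossProduct (Γ t) (SigmaR J m g μ ρ (Γ t) (Γ' t))) :
    ∀ t s : ℝ, ER J m g μ ρ (Γ t) (Γ' t) = ER J m g μ ρ (Γ s) (Γ' s) := by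
  have hdet : IsUnit J.det := hJpos.det_pos.ne'.isUnit
  have hGne : ∀ t, Γ t ≠ 0 := by
    intro t h
    have := hS2 t
    rw [h] at this
    simp at this
  have hDpos : ∀ t, 0 < Γ t ⬝ᵥ J.mulVec (Γ t) := by
    intro t
    have := hJpos.dotProduct_mulVec_pos (hGne t)
    simpa [Matrix.mulVec] using this
  have hDne : ∀ t, (Γ t ⬝ᵥ J.mulVec (Γ t)) ≠ 0 := fun t => (hDpos t).ne'
  have hE0 : ∀ t, HasDerivAt (fun s => ER J m g μ ρ (Γ s) (Γ' s)) 0 t := by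
    intro t
    have ha := hasDerivAt_cross3 (hd2 t) (hd1 t)
    have hJG := hasDerivAt_mulVec3 J (hd1 t)
    have hD := hasDerivAt_dot3 (hd1 t) hJG
    have hν := (hasDerivAt_const t μ).div hD (hDne t)
    have hβ := hasDerivAt_dot3 hJG ha
    have hb := hβ.div hD (hDne t)
    have hw := ha.add ((hν.sub hb).smul (hd1 t))
    have hwJ := hasDerivAt_mulVec3 J hw
    have hq := hasDerivAt_dot3 hw hwJ
    have hρ := hasDerivAt_dot3 (hasDerivAt_const t ρ) (hd1 t)
    have hE := (hq.const_mul (1/2 : ℝ)).sub (hρ.const_mul (m*g))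
    simp only [ER, νR, bR]
    convert hE using 1
    all_goals first | rfl | exact (routh_key J hJsymm hdet m g μ ρ (Γ t) (Γ' t) (Γ'' t)
      (hS2 t) (hT t) (hDne t) (hdyn t)).symm
  have hdiff : Differentiable ℝ (fun s => ER J m g μ ρ (Γ s) (Γ' s)) :=
    fun t => (hE0 t).differentiableAt
  intro t s
  exact is_const_of_deriv_eq_zero hdiff (fun x => (hE0 x).deriv) t s
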